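/- Let Ψ : (0, ∞) → (0, ∞) be an increasing, twice continuously differentiable function such that ∫_1^∞ du/Ψ(u) < ∞, liminf_{x→∞} Ψ'(x) = ∞, the limit lim_{x→∞} Ψ(x)/Ψ(x−1) exists in [1, ∞), and the limit lim_{x→∞} Ψ''(x)Ψ(x)/Ψ'(x)² exists and is positive. Then liminf_{n→∞} Ψ(n) · (Σ_{k=n}^∞ 1/Ψ(k)²) / (Σ_{k=n}^∞ 1/Ψ(k)) > 0. -/

import Mathlib

open Filter
open scoped Topology

/-- If `f` has derivative `f' ≤ 0` on `[a,b]`, then `f b ≤ f a`. -/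
lemma decr_of_deriv_nonpos (f f' : ℝ → ℝ) {a b : ℝ} (hab : a ≤ b)
    (hd : ∀ x ∈ Set.Icc a b, HasDerivAt f (f' x) x)
    (h0 : ∀ x ∈ Set.Icc a b, f' x ≤ 0) : f b ≤ f a := by
  have hA : AntitoneOn f (Set.Icc a b) := by
    apply antitoneOn_of_deriv_nonpos (convex_Icc a b)
    · exact fun x hx => (hd x hx).continuousAt.continuousWithinAt
    · intro x hx
      rw [interior_Icc] at hx
      exact (hd x (Set.Ioo_subset_Icc_self hx)).differentiableAt.differentiableWithinAt
    · intro x hx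
      rw [interior_Icc] at hx
      rw [(hd x (Set.Ioo_subset_Icc_self hx)).deriv]
      exact h0 x (Set.Ioo_subset_Icc_self hx)
  exact hA ⟨le_refl a, hab⟩ ⟨hab, le_refl b⟩ hab

/-- If `f` has derivative `f' ≥ 0` on `[a,b]`, then `f a ≤ f b`. -/
lemma incr_of_deriv_nonneg (f f' : ℝ → ℝ) {a b : ℝ} (hab : a ≤ b)
    (hd : ∀ x ∈ Set.Icc a b, HasDerivAt f (f' x) x)
    (h0 : ∀ x ∈ Set.Icc a b, 0 ≤ f' x) : f a ≤ f b := by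
  have this := decr_of_deriv_nonpos (fun x => -f x) (fun x => -f' x) hab
    (fun x hx => (hd x hx).neg) (fun x hx => neg_nonpos.mpr (h0 x hx))
  simp only [neg_le_neg_iff] at this
  exact this

/-- Gradient inequality for the convex function `s ↦ s^(-q)`. -/
lemma grad_ineq {q x y : ℝ} (hq : 0 < q) (hx : 1 ≤ x) (hxy : x ≤ y) :
    q * y ^ (-q - 1) * (y - x) + y ^ (-q) ≤ x ^ (-q) := by
  have hx0 : (0:ℝ) < x := lt_of_lt_of_le one_pos hx
  have hy0 : (0:ℝ) < y := lt_of_lt_of_le hx0 hxy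
  have hd : ∀ s ∈ Set.Icc x y,
      HasDerivAt (fun s => s ^ (-q) + (q * y ^ (-q - 1)) * s)
        ((-q) * s ^ (-q - 1) + q * y ^ (-q - 1)) s := by
    intro s hs
    have hs0 : s ≠ 0 := ne_of_gt (lt_of_lt_of_le hx0 hs.1)
    have h1 := Real.hasDerivAt_rpow_const (p := -q) (Or.inl hs0)
    have h2 : HasDerivAt (fun s : ℝ => (q * y ^ (-q - 1)) * s) (q * y ^ (-q - 1)) s := by
      simpa using (hasDerivAt_id s).const_mul (q * y ^ (-q - 1))
    exact h1.add h2
  have key := decr_of_deriv_nonpos _ _ hxy hd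
    (fun s hs => by
      have hs0 : (0:ℝ) < s := lt_of_lt_of_le hx0 hs.1
      have h3 : y ^ (-q - 1) ≤ s ^ (-q - 1) :=
        Real.rpow_le_rpow_of_nonpos hs0 hs.2 (by linarith)
      nlinarith)
  nlinarith [key]

/-- Partial sums of `(1 + jβ/φ)^(-1/β)` are bounded by `1 + φ/(1-β)`. -/
lemma sum_bound {β φ : ℝ} (hβ0 : 0 < β) (hβ1 : β < 1) (hφ : 0 < φ) (m : ℕ) :
    ∑ j ∈ Finset.range m, ((1 + (j:ℝ) * (β/φ)) ^ (-(1:ℝ)/β)) ≤ 1 + φ/(1-β) := by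
  set q : ℝ := (1-β)/β with hqdef
  have hq : 0 < q := div_pos (by linarith) hβ0
  have hexp : -q - 1 = -(1:ℝ)/β := by rw [hqdef]; field_simp; ring
  have hβφ : 0 < β/φ := div_pos hβ0 hφ
  have hxj : ∀ j : ℕ, (1:ℝ) ≤ 1 + (j:ℝ) * (β/φ) := by
    intro j
    have : (0:ℝ) ≤ (j:ℝ) := Nat.cast_nonneg j
    nlinarith
  set b : ℕ → ℝ := fun j => (1 + (j:ℝ) * (β/φ)) ^ (-q) with hbdef
  have hterm : ∀ j : ℕ, (1 + ((j:ℝ)+1) * (β/φ)) ^ (-(1:ℝ)/β)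
      ≤ (φ/(1-β)) * (b j - b (j+1)) := by
    intro j
    have h1 := grad_ineq hq (hxj j) (by nlinarith : (1 + (j:ℝ) * (β/φ)) ≤ 1 + ((j:ℝ)+1) * (β/φ))
    rw [← hexp]
    have hsub : (1 + ((j:ℝ)+1) * (β/φ)) - (1 + (j:ℝ) * (β/φ)) = β/φ := by ring
    rw [hsub] at h1
    have hb : b (j+1) = (1 + ((j:ℝ)+1) * (β/φ)) ^ (-q) := by rw [hbdef]; push_cast; ring_nf
    have hbj : b j = (1 + (j:ℝ) * (β/φ)) ^ (-q) := rfl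
    have hqβ : q * (β/φ) = (1-β)/φ := by rw [hqdef]; field_simp
    rw [hb, hbj]
    rw [div_mul_eq_mul_div, le_div_iff₀ (by linarith : (0:ℝ) < 1 - β)]
    set X := (1 + ((j:ℝ)+1) * (β/φ)) ^ (-q-1) with hX
    have key : X * ((1-β)/φ) + (1 + ((j:ℝ)+1) * (β/φ)) ^ (-q) ≤ (1 + (j:ℝ) * (β/φ)) ^ (-q) := by
      rw [show X * ((1-β)/φ) = q * X * (β/φ) by rw [← hqβ]; ring]
      exact h1
    have hid : φ * (X*((1-β)/φ)) = X*(1-β) := by field_simp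
    nlinarith [key, hid, hφ]
  cases m with
  | zero =>
    simp
    have := le_of_lt (div_pos hφ (by linarith : (0:ℝ) < 1-β))
    linarith
  | succ m' =>
    rw [Finset.sum_range_succ']
    have h0 : (1 + ((0:ℕ):ℝ) * (β/φ)) ^ (-(1:ℝ)/β) = 1 := by norm_num
    rw [h0]
    have hsum : ∑ j ∈ Finset.range m', ((1 + ((j:ℕ)+1:ℝ) * (β/φ)) ^ (-(1:ℝ)/β))
        ≤ (φ/(1-β)) * (b 0 - b m') := by
      rw [← Finset.sum_range_sub' b m', Finset.mul_sum]
      apply Finset.sum_le_sum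
      intro j _
      exact_mod_cast hterm j
    have hb0 : b 0 = 1 := by simp [hbdef]
    have hbm : 0 ≤ b m' := Real.rpow_nonneg (le_trans zero_le_one (hxj m')) _
    have : (φ/(1-β)) * (b 0 - b m') ≤ φ/(1-β) := by
      rw [hb0]
      have hφβ : 0 ≤ φ/(1-β) := le_of_lt (div_pos hφ (by linarith))
      nlinarith
    push_cast at hsum ⊢
    linarith

set_option maxHeartbeats 3200000 in
theorem liminf_ratio_tsum_inv_sq_pos_of_smooth
    (Ψ : ℝ → ℝ) (hpos : ∀ x > (0 : ℝ), 0 < Ψ x)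
    (hmono : StrictMonoOn Ψ (Set.Ioi 0))
    (hsmooth : ContDiffOn ℝ 2 Ψ (Set.Ioi 0))
    (hint : MeasureTheory.IntegrableOn (fun u => 1 / Ψ u) (Set.Ioi 1))
    (hderiv : Tendsto (deriv Ψ) atTop atTop)
    (hratio : ∃ L : ℝ, 1 ≤ L ∧ Tendsto (fun x : ℝ => Ψ x / Ψ (x - 1)) atTop (nhds L))
    (hsecond : ∃ C : ℝ, 0 < C ∧
      Tendsto (fun x : ℝ => deriv (deriv Ψ) x * Ψ x / (deriv Ψ x) ^ 2) atTop (nhds C)) :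
    0 < Filter.liminf (fun n : ℕ =>
        Ψ n * (∑' k : ℕ, 1 / (Ψ ((n + k : ℕ) : ℝ)) ^ 2)
          / (∑' k : ℕ, 1 / Ψ ((n + k : ℕ) : ℝ))) atTop := by
  clear hint hratio
  obtain ⟨C, hC, hCt⟩ := hsecond
  set Ψ' : ℝ → ℝ := deriv Ψ with hΨ'def
  set Ψ'' : ℝ → ℝ := deriv (deriv Ψ) with hΨ''def
  set γ : ℝ := 1 - C with hγdef
  set φ : ℝ → ℝ := fun x => Ψ x / Ψ' x with hφdef
  set D : ℝ → ℝ := fun x => 1 - Ψ'' x * Ψ x / (Ψ' x)^2 with hDdef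
  have hDt : Tendsto D atTop (nhds γ) := by
    rw [hDdef, hγdef]; exact tendsto_const_nhds.sub hCt
  clear_value Ψ' Ψ'' γ φ D
  -- differentiability facts
  have hΨd : ∀ x : ℝ, 0 < x → HasDerivAt Ψ (Ψ' x) x := by
    intro x hx
    rw [hΨ'def]
    exact ((hsmooth.differentiableOn (by norm_num)).differentiableAt
      (Ioi_mem_nhds hx)).hasDerivAt
  have hΨ'c1 : ContDiffOn ℝ 1 (deriv Ψ) (Set.Ioi 0) :=
    hsmooth.deriv_of_isOpen isOpen_Ioi (by norm_num)
  have hΨ'd : ∀ x : ℝ, 0 < x → HasDerivAt Ψ' (Ψ'' x) x := by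
    intro x hx
    rw [hΨ'def, hΨ''def]
    exact ((hΨ'c1.differentiableOn (by norm_num)).differentiableAt
      (Ioi_mem_nhds hx)).hasDerivAt
  have hφd : ∀ x : ℝ, 0 < x → Ψ' x ≠ 0 → HasDerivAt φ (D x) x := by
    intro x hx hne
    have h := (hΨd x hx).div (hΨ'd x hx) hne
    rw [hφdef, hDdef]
    convert (show HasDerivAt (fun y => Ψ y / Ψ' y) _ x from h) using 1
    field_simp
  have hev1 : ∀ᶠ x in atTop, 1 ≤ Ψ' x := hderiv.eventually_ge_atTop 1
  -- γ ≥ 0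
  have hγ0 : 0 ≤ γ := by
    by_contra hneg
    push_neg at hneg
    have hev2 : ∀ᶠ x in atTop, D x < γ/2 :=
      hDt.eventually (gt_mem_nhds (show γ < γ/2 by linarith))
    obtain ⟨A, hA⟩ := eventually_atTop.mp ((hev2.and hev1).and (eventually_ge_atTop (2:ℝ)))
    have hApos : (0:ℝ) < A := lt_of_lt_of_le two_pos (hA A le_rfl).2
    have hfacts : ∀ u : ℝ, A ≤ u → 0 < Ψ u ∧ 1 ≤ Ψ' u ∧ 0 < φ u := by
      intro u hu
      have hu0 : (0:ℝ) < u := lt_of_lt_of_le hApos hu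
      have h1 : 1 ≤ Ψ' u := (hA u hu).1.2
      refine ⟨hpos u hu0, h1, ?_⟩
      rw [hφdef]
      exact div_pos (hpos u hu0) (by linarith)
    have hkey : ∀ u : ℝ, A ≤ u → φ u - (γ/2)*u ≤ φ A - (γ/2)*A := by
      intro u hu
      apply decr_of_deriv_nonpos (fun s => φ s - (γ/2)*s) (fun s => D s - γ/2) hu
      · intro s hs
        have hs0 : (0:ℝ) < s := lt_of_lt_of_le hApos hs.1
        have hne : Ψ' s ≠ 0 := by have := (hA s hs.1).1.2; linarith
        have hlin : HasDerivAt (fun s : ℝ => (γ/2)*s) (γ/2) s := by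
          simpa using (hasDerivAt_id s).const_mul (γ/2)
        exact (hφd s hs0 hne).sub hlin
      · intro s hs
        have := (hA s hs.1).1.1
        linarith
    set u : ℝ := A + (2*(φ A))/(-γ) + 1 with hudef
    have hφA : 0 < φ A := (hfacts A le_rfl).2.2
    have hnn : 0 ≤ (2*(φ A))/(-γ) := div_nonneg (by linarith) (by linarith)
    have hAu : A ≤ u := by rw [hudef]; linarith
    have h1 := hkey u hAu
    have hne : γ ≠ 0 := by linarith
    have hC1 : (1:ℝ) < C := by rw [hγdef] at hneg; linarith
    have hne2 : (-1:ℝ) + C ≠ 0 := ne_of_gt (by linarith)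
    have hid : γ/2*u = γ/2*A - φ A + γ/2 := by
      rw [hudef]
      linear_combination (-(φ A)) * (mul_inv_cancel₀ (neg_ne_zero.mpr hne))
    have hφu : 0 < φ u := (hfacts u hAu).2.2
    linarith [h1, hid, hφu]
  have hγ1 : γ < 1 := by rw [hγdef]; linarith
  set β : ℝ := (1+γ)/2 with hβdef
  have hβ0 : 0 < β := by rw [hβdef]; linarith
  have hβ1 : β < 1 := by rw [hβdef]; linarith
  have hγβ : γ < β := by rw [hβdef]; linarith
  -- thresholds
  have hevD1 : ∀ᶠ x in atTop, D x < β := hDt.eventually (gt_mem_nhds hγβ)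
  have hevD2 : ∀ᶠ x in atTop, γ - 1/4 < D x :=
    hDt.eventually (lt_mem_nhds (show γ - 1/4 < γ by linarith))
  obtain ⟨X₁, hX₁⟩ := eventually_atTop.mp
    (((hevD1.and hevD2).and hev1).and (eventually_ge_atTop (2:ℝ)))
  -- basic facts on [X₁, ∞)
  have hbase : ∀ x : ℝ, X₁ ≤ x →
      0 < x ∧ 0 < Ψ x ∧ 1 ≤ Ψ' x ∧ 0 < φ x ∧ D x ≤ β ∧ -(1/4 : ℝ) ≤ D x := by
    intro x hx
    obtain ⟨⟨⟨hD1, hD2⟩, hΨ'1⟩, hx2⟩ := hX₁ x hx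
    have hx0 : (0:ℝ) < x := by linarith
    have hΨx : 0 < Ψ x := hpos x hx0
    refine ⟨hx0, hΨx, hΨ'1, ?_, le_of_lt hD1, by linarith⟩
    rw [hφdef]
    exact div_pos hΨx (by linarith)
  have hφhd : ∀ s : ℝ, X₁ ≤ s → HasDerivAt φ (D s) s := by
    intro s hs
    obtain ⟨hs0, _, hΨ'1, _, _, _⟩ := hbase s hs
    exact hφd s hs0 (by linarith)
  -- (i) φ grows at most linearly with slope β
  have hφup : ∀ x u : ℝ, X₁ ≤ x → x ≤ u → φ u ≤ φ x + β*(u-x) := by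
    intro x u hx hxu
    have := decr_of_deriv_nonpos (fun s => φ s - β*s) (fun s => D s - β) hxu
      (fun s hs => by
        have hlin : HasDerivAt (fun s : ℝ => β*s) β s := by
          simpa using (hasDerivAt_id s).const_mul β
        exact (hφhd s (le_trans hx hs.1)).sub hlin)
      (fun s hs => by
        show D s - β ≤ 0
        have := (hbase s (le_trans hx hs.1)).2.2.2.2.1; linarith)
    have h2 : φ u - β*u ≤ φ x - β*x := this
    linarith
  -- (ii) φ does not drop too fast
  have hφdown : ∀ x u : ℝ, X₁ ≤ x → x ≤ u → u ≤ x + 2*(φ x) → φ x / 2 ≤ φ u := by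
    intro x u hx hxu hu2
    have := decr_of_deriv_nonpos (fun s => -(φ s) - s/4) (fun s => -(D s) - 1/4) hxu
      (fun s hs => by
        have hlin : HasDerivAt (fun s : ℝ => s/4) (1/4 : ℝ) s := by
          simpa using (hasDerivAt_id s).div_const 4
        exact ((hφhd s (le_trans hx hs.1)).neg).sub hlin)
      (fun s hs => by
        show -(D s) - 1/4 ≤ 0
        have := (hbase s (le_trans hx hs.1)).2.2.2.2.2; linarith)
    have h2 : -(φ u) - u/4 ≤ -(φ x) - x/4 := this
    have hφx := (hbase x hx).2.2.2.1
    linarith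
  -- (iii) pointwise lower bound for Ψ
  have hΨlow : ∀ x u : ℝ, X₁ ≤ x → x ≤ u →
      Ψ x * (1 + (u-x)*(β/φ x)) ^ ((1:ℝ)/β) ≤ Ψ u := by
    intro x u hx hxu
    obtain ⟨hx0, hΨx, hΨ'x, hφx, _, _⟩ := hbase x hx
    have hgpos : ∀ s : ℝ, x ≤ s → (0:ℝ) < 1 + (s-x)*(β/φ x) := by
      intro s hs
      have : 0 ≤ (s-x)*(β/φ x) := mul_nonneg (by linarith) (le_of_lt (div_pos hβ0 hφx))
      linarith
    have hder : ∀ s ∈ Set.Icc x u,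
        HasDerivAt (fun s => Real.log (Ψ s) - (1/β) * Real.log (1 + (s-x)*(β/φ x)))
          (Ψ' s/Ψ s - (1/β)*((β/φ x)/(1 + (s-x)*(β/φ x)))) s := by
      intro s hs
      obtain ⟨hs0, hΨs, _, _, _, _⟩ := hbase s (le_trans hx hs.1)
      have h1 : HasDerivAt (fun s => Real.log (Ψ s)) (Ψ' s/Ψ s) s :=
        (hΨd s hs0).log (ne_of_gt hΨs)
      have h2 : HasDerivAt (fun s : ℝ => 1 + (s-x)*(β/φ x)) (β/φ x) s := by
        simpa using (((hasDerivAt_id s).sub_const x).mul_const (β/φ x)).const_add 1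
      have h3 := (h2.log (ne_of_gt (hgpos s hs.1))).const_mul (1/β)
      exact h1.sub h3
    have hnn : ∀ s ∈ Set.Icc x u,
        0 ≤ Ψ' s/Ψ s - (1/β)*((β/φ x)/(1 + (s-x)*(β/φ x))) := by
      intro s hs
      obtain ⟨hs0, hΨs, hΨ's, hφs, _, _⟩ := hbase s (le_trans hx hs.1)
      have hΨ's0 : (0:ℝ) < Ψ' s := by linarith
      have hg := hgpos s hs.1
      have hΨΨ' : Ψ' s/Ψ s = 1/φ s := by simp only [hφdef]; field_simp
      have hsimp : (1/β)*((β/φ x)/(1 + (s-x)*(β/φ x))) = 1/(φ x + (s-x)*β) := by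
        rw [show φ x + (s-x)*β = φ x * (1 + (s-x)*(β/φ x)) by field_simp]
        field_simp
      rw [hΨΨ', hsimp]
      have hup := hφup x s hx hs.1
      have hd2 : 0 < φ x + (s-x)*β := by nlinarith
      have h5 : 1/(φ x + (s-x)*β) ≤ 1/φ s := by
        apply one_div_le_one_div_of_le hφs
        nlinarith [hup]
      linarith
    have key := incr_of_deriv_nonneg
      (fun s => Real.log (Ψ s) - (1/β) * Real.log (1 + (s-x)*(β/φ x)))
      (fun s => Ψ' s/Ψ s - (1/β)*((β/φ x)/(1 + (s-x)*(β/φ x)))) hxu hder hnn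
    have key2 : Real.log (Ψ x) - (1/β) * Real.log (1 + (x-x)*(β/φ x))
        ≤ Real.log (Ψ u) - (1/β) * Real.log (1 + (u-x)*(β/φ x)) := key
    rw [show (1:ℝ) + (x-x)*(β/φ x) = 1 by ring, Real.log_one, mul_zero, sub_zero] at key2
    have hgu := hgpos u hxu
    have hΨu : 0 < Ψ u := (hbase u (le_trans hx hxu)).2.1
    have := Real.exp_le_exp.mpr (show Real.log (Ψ x) + (1/β)*Real.log (1 + (u-x)*(β/φ x))
        ≤ Real.log (Ψ u) by linarith [key2])
    rwa [Real.exp_add, Real.exp_log hΨx, Real.exp_log hΨu,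
      show (1/β)*Real.log (1 + (u-x)*(β/φ x)) = Real.log ((1 + (u-x)*(β/φ x)) ^ ((1:ℝ)/β))
        by rw [Real.log_rpow hgu],
      Real.exp_log (Real.rpow_pos_of_pos hgu _)] at this
  -- (iv) pointwise upper bound for Ψ on short intervals
  have hΨup : ∀ x u : ℝ, X₁ ≤ x → x ≤ u → u ≤ x + 2*(φ x) → Ψ u ≤ Real.exp 4 * Ψ x := by
    intro x u hx hxu hu2
    obtain ⟨hx0, hΨx, hΨ'x, hφx, _, _⟩ := hbase x hx
    have key := decr_of_deriv_nonpos
      (fun s => Real.log (Ψ s) - (2/φ x)*s)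
      (fun s => Ψ' s/Ψ s - 2/φ x) hxu
      (fun s hs => by
        obtain ⟨hs0, hΨs, _, _, _, _⟩ := hbase s (le_trans hx hs.1)
        have h1 : HasDerivAt (fun s => Real.log (Ψ s)) (Ψ' s/Ψ s) s :=
          (hΨd s hs0).log (ne_of_gt hΨs)
        have hlin : HasDerivAt (fun s : ℝ => (2/φ x)*s) (2/φ x) s := by
          simpa using (hasDerivAt_id s).const_mul (2/φ x)
        exact h1.sub hlin)
      (fun s hs => by
        show Ψ' s/Ψ s - 2/φ x ≤ 0
        obtain ⟨hs0, hΨs, hΨ's, hφs, _, _⟩ := hbase s (le_trans hx hs.1)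
        have hΨΨ' : Ψ' s/Ψ s = 1/φ s := by simp only [hφdef]; field_simp
        rw [hΨΨ']
        have hdown := hφdown x s hx hs.1 (by linarith [hs.2])
        have : 1/φ s ≤ 2/φ x := by
          rw [div_le_div_iff₀ hφs (by linarith : (0:ℝ) < φ x)]
          linarith
        linarith)
    have key2 : Real.log (Ψ u) - (2/φ x)*u ≤ Real.log (Ψ x) - (2/φ x)*x := key
    have hΨu : 0 < Ψ u := (hbase u (le_trans hx hxu)).2.1
    have hfr : (2/φ x)*(u - x) ≤ 4 := by
      rw [div_mul_eq_mul_div, div_le_iff₀ hφx]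
      linarith
    have hexp2 : (2/φ x)*(u-x) = (2/φ x)*u - (2/φ x)*x := by ring
    have := Real.exp_le_exp.mpr (show Real.log (Ψ u) ≤ 4 + Real.log (Ψ x) by
      linarith [key2, hfr, hexp2])
    rwa [Real.exp_add, Real.exp_log hΨx, Real.exp_log hΨu] at this
  -- endgame
  obtain ⟨N, hN⟩ := exists_nat_ge X₁
  have h1β : (0:ℝ) < 1 - β := by linarith
  have hKpos : (0:ℝ) < 1 + 1/(1-β) := by positivity
  set c : ℝ := 1/((Real.exp 4)^2 * (1 + 1/(1-β))) with hcdef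
  clear_value c
  have hcpos : 0 < c := by rw [hcdef]; positivity
  have main : ∀ n : ℕ, N ≤ n →
      c ≤ Ψ n * (∑' k : ℕ, 1 / (Ψ ((n + k : ℕ) : ℝ)) ^ 2) / (∑' k : ℕ, 1 / Ψ ((n + k : ℕ) : ℝ))
      ∧ Ψ n * (∑' k : ℕ, 1 / (Ψ ((n + k : ℕ) : ℝ)) ^ 2)
          / (∑' k : ℕ, 1 / Ψ ((n + k : ℕ) : ℝ)) ≤ 1 := by
    intro n hn
    have hxX : X₁ ≤ (n:ℝ) := le_trans hN (Nat.cast_le.mpr hn)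
    obtain ⟨hx0, hΨx, hΨ'x, hφx, _, _⟩ := hbase (n:ℝ) hxX
    set x : ℝ := (n:ℝ) with hxdef
    clear_value x
    have hrw : ∀ k : ℕ, ((n + k : ℕ) : ℝ) = x + (k:ℝ) := by
      intro k; rw [hxdef]; push_cast; ring
    simp only [hrw]
    have hxk0 : ∀ k : ℕ, (0:ℝ) < x + k := by
      intro k; have := Nat.cast_nonneg (α := ℝ) k; linarith
    have hΨk : ∀ k : ℕ, 0 < Ψ (x + k) := fun k => hpos _ (hxk0 k)
    have hΨxk : ∀ k : ℕ, Ψ x ≤ Ψ (x + k) := fun k =>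
      hmono.monotoneOn (Set.mem_Ioi.mpr hx0) (Set.mem_Ioi.mpr (hxk0 k))
        (le_add_of_nonneg_right (Nat.cast_nonneg k))
    -- termwise upper bound for 1/Ψ
    have hterm : ∀ k : ℕ, 1/Ψ (x + k) ≤ (1/Ψ x) * ((1 + (k:ℝ)*(β/φ x)) ^ (-(1:ℝ)/β)) := by
      intro k
      have hE1 : (1:ℝ) ≤ 1 + (k:ℝ)*(β/φ x) := by
        have : 0 ≤ (k:ℝ)*(β/φ x) :=
          mul_nonneg (Nat.cast_nonneg k) (le_of_lt (div_pos hβ0 hφx))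
        linarith
      have hE0 : (0:ℝ) < 1 + (k:ℝ)*(β/φ x) := by linarith
      have hl := hΨlow x (x + k) hxX (by linarith [Nat.cast_nonneg (α := ℝ) k])
      rw [show x + (k:ℝ) - x = (k:ℝ) by ring] at hl
      have hrpos : (0:ℝ) < (1 + (k:ℝ)*(β/φ x)) ^ ((1:ℝ)/β) := Real.rpow_pos_of_pos hE0 _
      have h2 : 1/Ψ (x + k) ≤ 1/(Ψ x * (1 + (k:ℝ)*(β/φ x)) ^ ((1:ℝ)/β)) :=
        one_div_le_one_div_of_le (by positivity) hl
      rw [show -(1:ℝ)/β = -((1:ℝ)/β) by ring, Real.rpow_neg (le_of_lt hE0)]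
      refine le_trans h2 (le_of_eq ?_)
      rw [one_div, mul_inv, one_div]
      ring
    -- partial sums of 1/Ψ are bounded
    have hsum : ∀ m : ℕ, ∑ k ∈ Finset.range m, 1/Ψ (x + k) ≤ (1/Ψ x) * (1 + φ x/(1-β)) := by
      intro m
      calc ∑ k ∈ Finset.range m, 1/Ψ (x + k)
          ≤ ∑ k ∈ Finset.range m, (1/Ψ x) * ((1 + (k:ℝ)*(β/φ x)) ^ (-(1:ℝ)/β)) :=
            Finset.sum_le_sum (fun k _ => hterm k)
        _ = (1/Ψ x) * ∑ k ∈ Finset.range m, ((1 + (k:ℝ)*(β/φ x)) ^ (-(1:ℝ)/β)) := by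
            rw [Finset.mul_sum]
        _ ≤ (1/Ψ x) * (1 + φ x/(1-β)) :=
            mul_le_mul_of_nonneg_left (sum_bound hβ0 hβ1 hφx m) (by positivity)
    have hg_nonneg : ∀ k : ℕ, 0 ≤ 1/Ψ (x + k) := fun k => le_of_lt (one_div_pos.mpr (hΨk k))
    have hgsum : Summable (fun k : ℕ => 1/Ψ (x + k)) := summable_of_sum_range_le hg_nonneg hsum
    have hS1le : (∑' k : ℕ, 1/Ψ (x + k)) ≤ (1/Ψ x) * (1 + φ x/(1-β)) :=
      Summable.tsum_le_of_sum_range_le hgsum hsum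
    have hS1pos : 0 < ∑' k : ℕ, 1/Ψ (x + k) := by
      have h0 : 0 < 1/Ψ (x + ((0:ℕ):ℝ)) := one_div_pos.mpr (hΨk 0)
      exact lt_of_lt_of_le h0 (Summable.le_tsum hgsum 0 (fun i _ => hg_nonneg i))
    have hg2_nonneg : ∀ k : ℕ, 0 ≤ 1/(Ψ (x + k))^2 := by
      intro k; positivity
    have hg2le : ∀ k : ℕ, 1/(Ψ (x + k))^2 ≤ (1/Ψ x) * (1/Ψ (x + k)) := by
      intro k
      rw [div_mul_div_comm, one_mul]
      apply one_div_le_one_div_of_le (mul_pos hΨx (hΨk k))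
      nlinarith [hΨxk k, hΨk k, hΨx]
    have hg2sum : Summable (fun k : ℕ => 1/(Ψ (x + k))^2) :=
      Summable.of_nonneg_of_le hg2_nonneg hg2le (hgsum.mul_left (1/Ψ x))
    -- lower bound for the tail of 1/Ψ²
    set J : ℕ := Nat.floor (2 * φ x) with hJdef
    clear_value J
    have hS2ge : ((J:ℝ)+1) * (1/((Real.exp 4) * Ψ x)^2) ≤ ∑' k : ℕ, 1/(Ψ (x + k))^2 := by
      have hsub : ∑ k ∈ Finset.range (J+1), 1/(Ψ (x + k))^2 ≤ ∑' k : ℕ, 1/(Ψ (x + k))^2 :=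
        Summable.sum_le_tsum _ (fun i _ => hg2_nonneg i) hg2sum
      refine le_trans ?_ hsub
      have hbound : ∀ k ∈ Finset.range (J+1), 1/((Real.exp 4) * Ψ x)^2 ≤ 1/(Ψ (x + k))^2 := by
        intro k hk
        have hkJ : k ≤ J := Nat.lt_succ_iff.mp (Finset.mem_range.mp hk)
        have hfl := Nat.floor_le (by positivity : (0:ℝ) ≤ 2 * φ x)
        rw [← hJdef] at hfl
        have hk2 : (k:ℝ) ≤ 2 * φ x := le_trans (Nat.cast_le.mpr hkJ) hfl
        have hup' := hΨup x (x + k) hxX (by linarith [Nat.cast_nonneg (α := ℝ) k]) (by linarith)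
        apply one_div_le_one_div_of_le (pow_pos (hΨk k) 2)
        nlinarith [hΨk k, hup', Real.exp_pos (4:ℝ), hΨx]
      calc ((J:ℝ)+1) * (1/((Real.exp 4) * Ψ x)^2)
          = ∑ _k ∈ Finset.range (J+1), 1/((Real.exp 4) * Ψ x)^2 := by
            rw [Finset.sum_const, Finset.card_range, nsmul_eq_mul]; push_cast; ring
        _ ≤ ∑ k ∈ Finset.range (J+1), 1/(Ψ (x + k))^2 := Finset.sum_le_sum hbound
    constructor
    · -- lower bound by c
      rw [le_div_iff₀ hS1pos]
      have hMJ : max 1 (φ x) ≤ (J:ℝ) + 1 := by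
        apply max_le
        · have : (0:ℝ) ≤ (J:ℝ) := Nat.cast_nonneg J
          linarith
        · have hlt := Nat.lt_floor_add_one (2 * φ x)
          rw [← hJdef] at hlt
          linarith
      have hM1 : (1:ℝ) ≤ max 1 (φ x) := le_max_left _ _
      have hMφ : φ x ≤ max 1 (φ x) := le_max_right _ _
      have ht0 : (0:ℝ) ≤ 1/(1-β) := by positivity
      have hstep : 1 + φ x/(1-β) ≤ (1 + 1/(1-β)) * ((J:ℝ)+1) := by
        have hd1 : φ x/(1-β) ≤ (max 1 (φ x))/(1-β) := by gcongr
        have hd2 : (max 1 (φ x))/(1-β) = (max 1 (φ x)) * (1/(1-β)) := by ring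
        nlinarith [hMJ, hM1, hMφ, hd1, hd2, ht0, hKpos]
      calc c * (∑' k : ℕ, 1/Ψ (x + k))
          ≤ c * ((1/Ψ x) * (1 + φ x/(1-β))) :=
            mul_le_mul_of_nonneg_left hS1le (le_of_lt hcpos)
        _ ≤ c * ((1/Ψ x) * ((1 + 1/(1-β)) * ((J:ℝ)+1))) := by
            refine mul_le_mul_of_nonneg_left ?_ (le_of_lt hcpos)
            exact mul_le_mul_of_nonneg_left hstep (by positivity)
        _ = Ψ x * (((J:ℝ)+1) * (1/((Real.exp 4) * Ψ x)^2)) := by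
            rw [hcdef]
            field_simp
        _ ≤ Ψ x * (∑' k : ℕ, 1/(Ψ (x + k))^2) :=
            mul_le_mul_of_nonneg_left hS2ge (le_of_lt hΨx)
    · -- upper bound by 1
      rw [div_le_one hS1pos]
      have hterm2 : ∀ k : ℕ, Ψ x * (1/(Ψ (x + k))^2) ≤ 1/Ψ (x + k) := by
        intro k
        rw [mul_one_div, div_le_div_iff₀ (pow_pos (hΨk k) 2) (hΨk k)]
        nlinarith [hΨxk k, hΨk k, hΨx]
      calc Ψ x * ∑' k : ℕ, 1/(Ψ (x + k))^2
          = ∑' k : ℕ, Ψ x * (1/(Ψ (x + k))^2) := by rw [tsum_mul_left]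
        _ ≤ ∑' k : ℕ, 1/Ψ (x + k) :=
            Summable.tsum_le_tsum hterm2 (hg2sum.mul_left _) hgsum
  have hlb : ∀ᶠ n : ℕ in atTop, c ≤ Ψ n * (∑' k : ℕ, 1 / (Ψ ((n + k : ℕ) : ℝ)) ^ 2)
      / (∑' k : ℕ, 1 / Ψ ((n + k : ℕ) : ℝ)) :=
    eventually_atTop.mpr ⟨N, fun n hn => (main n hn).1⟩
  have hub : ∀ᶠ n : ℕ in atTop, Ψ n * (∑' k : ℕ, 1 / (Ψ ((n + k : ℕ) : ℝ)) ^ 2)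
      / (∑' k : ℕ, 1 / Ψ ((n + k : ℕ) : ℝ)) ≤ 1 :=
    eventually_atTop.mpr ⟨N, fun n hn => (main n hn).2⟩
  exact lt_of_lt_of_le hcpos
    (le_liminf_of_le ((isBoundedUnder_of_eventually_le hub).isCoboundedUnder_ge) hlb)
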